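/- In the GLM risk setup, with Σ = E[xxᵀ]: (i) R is K_{Φ''}·λ_max(Σ)-smooth over ℝ^p; (ii) if Σ is positive definite and C ⊆ ℝ^p is convex with ‖θ‖₂ ≤ K_B for all θ ∈ C, then R is Φ''(L_x K_B)·λ_min(Σ)-strongly convex over C; (iii) ∇R(θ*) = 0, and if θ* ∈ C then R attains its minimum over C at θ*. -/

import Mathlib

open MeasureTheory
open scoped RealInnerProductSpace


private lemma tangent_le {D : Set ℝ} (hD : Convex ℝ D) {g : ℝ → ℝ}
    (hg : ConvexOn ℝ D g) (hdiff : Differentiable ℝ g)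
    {s t : ℝ} (hs : s ∈ D) (ht : t ∈ D) :
    g t + deriv g t * (s - t) ≤ g s := by
  rcases lt_trichotomy s t with h | h | h
  · have h1 := hg.slope_le_deriv hs ht h (hdiff t)
    rw [slope_def_field] at h1
    have ht' : t - s > 0 := by linarith
    rw [div_le_iff₀ ht'] at h1
    · nlinarith
  · simp [h]
  · have h1 := hg.deriv_le_slope ht hs h (hdiff t)
    rw [slope_def_field] at h1
    have hs' : s - t > 0 := by linarith
    rw [le_div_iff₀ hs'] at h1
    nlinarith

private lemma taylor_ge {f : ℝ → ℝ} (hf1 : Differentiable ℝ f)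
    (hf2 : Differentiable ℝ (deriv f)) {D : Set ℝ} (hD : Convex ℝ D) {c : ℝ}
    (hc : ∀ u ∈ D, c ≤ deriv (deriv f) u) {s t : ℝ} (hs : s ∈ D) (ht : t ∈ D) :
    c / 2 * (s - t) ^ 2 ≤ f s - f t - deriv f t * (s - t) := by
  set g : ℝ → ℝ := fun u => f u - c / 2 * u ^ 2 with hgdef
  have hg' : ∀ u, HasDerivAt g (deriv f u - c * u) u := by
    intro u
    have h1 : HasDerivAt (fun u : ℝ => c / 2 * u ^ 2) (c / 2 * (2 * u ^ 1)) u :=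
      (hasDerivAt_pow 2 u).const_mul (c / 2)
    have h2 := ((hf1 u).hasDerivAt).sub h1
    rw [show deriv f u - c * u = deriv f u - c / 2 * (2 * u ^ 1) by ring]
    exact h2
  have hgderiv : deriv g = fun u => deriv f u - c * u := funext fun u => (hg' u).deriv
  have hgdiff : Differentiable ℝ g := fun u => (hg' u).differentiableAt
  have hg'' : ∀ u, HasDerivAt (deriv g) (deriv (deriv f) u - c) u := by
    intro u
    rw [hgderiv]
    have := ((hf2 u).hasDerivAt).sub ((hasDerivAt_id u).const_mul c)
    simp only [mul_one] at this
    exact this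
  have hgconv : ConvexOn ℝ D g := by
    apply convexOn_of_deriv2_nonneg hD hgdiff.continuous.continuousOn
      (hgdiff.differentiableOn) (fun u hu => ((hg'' u).differentiableAt).differentiableWithinAt)
    intro u hu
    have h3 : deriv (deriv g) u = deriv (deriv f) u - c := (hg'' u).deriv
    simp only [Function.iterate_succ, Function.iterate_zero, Function.comp_apply, Function.id_def]
    rw [h3]
    have := hc u (interior_subset hu)
    linarith
  have htan := tangent_le hD hgconv hgdiff hs ht
  have hdg : deriv g t = deriv f t - c * t := (hg' t).deriv
  rw [hdg] at htan
  simp only [hgdef] at htan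
  nlinarith

private lemma taylor_le {f : ℝ → ℝ} (hf1 : Differentiable ℝ f)
    (hf2 : Differentiable ℝ (deriv f)) {D : Set ℝ} (hD : Convex ℝ D) {c : ℝ}
    (hc : ∀ u ∈ D, deriv (deriv f) u ≤ c) {s t : ℝ} (hs : s ∈ D) (ht : t ∈ D) :
    f s - f t - deriv f t * (s - t) ≤ c / 2 * (s - t) ^ 2 := by
  have hd1 : deriv (fun u => -f u) = fun u => -deriv f u := funext fun u => deriv.neg
  have h2 : Differentiable ℝ (deriv fun u => -f u) := by rw [hd1]; exact hf2.neg
  have hc' : ∀ u ∈ D, -c ≤ deriv (deriv fun u => -f u) u := by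
    intro u hu
    rw [hd1]
    have h3 : deriv (fun u => -deriv f u) u = -deriv (deriv f) u := deriv.neg
    rw [h3]
    linarith [hc u hu]
  have := taylor_ge hf1.neg h2 hD hc' hs ht
  rw [show deriv (-f) t = -deriv f t from deriv.neg] at this
  simp only [Pi.neg_apply] at this
  nlinarith


/-- Smoothness, strong convexity and minimization properties of the GLM population risk
(Lemma `GLM_prelim_lem` in the paper). Here `lamMax` (resp. `lamMin`) plays the role of
`λ_max(Σ)` (resp. `λ_min(Σ)`), characterized through the quadratic form
`v ↦ E[⟨x, v⟩²] = vᵀΣv`; positive definiteness of `Σ` is `0 < lamMin`. -/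
theorem stmt_1 {p : ℕ} {Ω : Type*} [MeasurableSpace Ω]
    (μ : Measure Ω) [IsProbabilityMeasure μ]
    (x : Ω → EuclideanSpace ℝ (Fin p)) (hxmeas : Measurable x)
    (Lx : ℝ) (hxbd : ∀ᵐ ω ∂μ, ‖x ω‖ ≤ Lx)
    (hEx : ∫ ω, x ω ∂μ = 0)
    (Φ : ℝ → ℝ) (hΦ : ContDiff ℝ 2 Φ)
    (KΦ' KΦ'' : ℝ)
    (hΦ' : ∀ t : ℝ, |deriv Φ t| ≤ KΦ')
    (hΦ''pos : ∀ t : ℝ, 0 < deriv (deriv Φ) t)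
    (hΦ''bd : ∀ t : ℝ, deriv (deriv Φ) t ≤ KΦ'')
    (hΦ''even : ∀ t : ℝ, deriv (deriv Φ) (-t) = deriv (deriv Φ) t)
    (hΦ''anti : AntitoneOn (deriv (deriv Φ)) (Set.Ici (0:ℝ)))
    (θstar : EuclideanSpace ℝ (Fin p))
    (R : EuclideanSpace ℝ (Fin p) → ℝ)
    (hR : ∀ θ, R θ = ∫ ω, (Φ ⟪x ω, θ⟫ - deriv Φ ⟪x ω, θstar⟫ * ⟪x ω, θ⟫) ∂μ)
    (lamMax lamMin : ℝ)
    (hlamMax : ∀ v : EuclideanSpace ℝ (Fin p), ∫ ω, ⟪x ω, v⟫ ^ 2 ∂μ ≤ lamMax * ‖v‖ ^ 2)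
    (hlamMin : ∀ v : EuclideanSpace ℝ (Fin p), lamMin * ‖v‖ ^ 2 ≤ ∫ ω, ⟪x ω, v⟫ ^ 2 ∂μ) :
    -- (i) `R` is `K_{Φ''}·λ_max(Σ)`-smooth over `ℝ^p`
    (∀ a b : EuclideanSpace ℝ (Fin p),
      R a - R b - ⟪gradient R b, a - b⟫ ≤ KΦ'' * lamMax / 2 * ‖a - b‖ ^ 2) ∧
    -- (ii) if `Σ ≻ 0` and `C` is convex and contained in the ball of radius `K_B`,
    -- then `R` is `Φ''(L_x·K_B)·λ_min(Σ)`-strongly convex over `C`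
    (0 < lamMin →
      ∀ (C : Set (EuclideanSpace ℝ (Fin p))) (KB : ℝ), Convex ℝ C →
        (∀ θ ∈ C, ‖θ‖ ≤ KB) →
        ∀ a ∈ C, ∀ b ∈ C,
          deriv (deriv Φ) (Lx * KB) * lamMin / 2 * ‖a - b‖ ^ 2 ≤
            R a - R b - ⟪gradient R b, a - b⟫) ∧
    -- (iii) `∇R(θ*) = 0`, and if `θ* ∈ C` then `R` is minimized over `C` at `θ*`
    gradient R θstar = 0 ∧
    (∀ C : Set (EuclideanSpace ℝ (Fin p)), θstar ∈ C → ∀ θ ∈ C, R θstar ≤ R θ) := by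
  classical
  -- basic regularity facts about Φ
  have hΦ11 : ContDiff ℝ (1 + 1 : ℕ) Φ := by exact_mod_cast hΦ
  have hΦ1 : Differentiable ℝ Φ := hΦ.differentiable (by norm_num)
  have hd : ContDiff ℝ (1 : ℕ) (deriv Φ) := by
    have := (contDiff_succ_iff_deriv (n := (1:ℕ))).mp (by exact_mod_cast hΦ11)
    exact this.2.2
  have hd2 : Differentiable ℝ (deriv Φ) := hd.differentiable (by norm_num)
  have hΦcont' : Continuous (deriv Φ) := hd2.continuous
  have hK'' : (0:ℝ) < KΦ'' := lt_of_lt_of_le (hΦ''pos 0) (hΦ''bd 0)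
  have hK' : (0:ℝ) ≤ KΦ' := le_trans (abs_nonneg _) (hΦ' 0)
  have hLx : (0:ℝ) ≤ Lx := by
    obtain ⟨ω, hω⟩ := hxbd.exists
    exact (norm_nonneg _).trans hω
  -- global growth of Φ
  have hΦgrow : ∀ s : ℝ, |Φ s| ≤ |Φ 0| + KΦ' * |s| := by
    intro s
    have hlip : LipschitzWith (Real.toNNReal KΦ') Φ := by
      apply lipschitzWith_of_nnnorm_deriv_le hΦ1
      intro t
      rw [← NNReal.coe_le_coe]
      simpa [Real.coe_toNNReal _ hK'] using hΦ' t
    have := hlip.dist_le_mul s 0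
    rw [Real.dist_eq, Real.dist_eq, Real.coe_toNNReal _ hK'] at this
    simp only [sub_zero] at this
    calc |Φ s| ≤ |Φ s - Φ 0| + |Φ 0| := by
          have := abs_add_le (Φ s - Φ 0) (Φ 0); simpa using this
      _ ≤ |Φ 0| + KΦ' * |s| := by linarith
  -- measurability
  have hip_meas : ∀ v : EuclideanSpace ℝ (Fin p), Measurable fun ω => ⟪x ω, v⟫ := by
    intro v
    have hcont : Continuous fun w : EuclideanSpace ℝ (Fin p) => ⟪w, v⟫ :=
      continuous_id.inner continuous_const
    exact hcont.measurable.comp hxmeas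
  have hip_bd : ∀ v : EuclideanSpace ℝ (Fin p), ∀ᵐ ω ∂μ, |⟪x ω, v⟫| ≤ Lx * ‖v‖ := by
    intro v
    filter_upwards [hxbd] with ω hω
    exact (abs_real_inner_le_norm _ _).trans (mul_le_mul_of_nonneg_right hω (norm_nonneg _))
  -- basic integrability
  have hbdd_int : ∀ (g : Ω → ℝ) (Cg : ℝ), Measurable g → (∀ᵐ ω ∂μ, |g ω| ≤ Cg) →
      Integrable g μ := by
    intro g Cg hg hb
    exact (integrable_const Cg).mono' hg.aestronglyMeasurable
      (by simpa [Real.norm_eq_abs] using hb)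
  have hintΦ : ∀ θ, Integrable (fun ω => Φ ⟪x ω, θ⟫) μ := by
    intro θ
    have hmeas : Measurable fun ω => Φ ⟪x ω, θ⟫ := by
      exact hΦ1.continuous.measurable.comp (hip_meas θ)
    apply hbdd_int _ (|Φ 0| + KΦ' * (Lx * ‖θ‖)) hmeas
    filter_upwards [hip_bd θ] with ω hω
    have h1 := hΦgrow ⟪x ω, θ⟫
    nlinarith [abs_nonneg ⟪x ω, θ⟫]
  have hintmul : ∀ b v, Integrable (fun ω => deriv Φ ⟪x ω, b⟫ * ⟪x ω, v⟫) μ := by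
    intro b v
    apply hbdd_int _ (KΦ' * (Lx * ‖v‖))
      ((hΦcont'.measurable.comp (hip_meas b)).mul (hip_meas v))
    filter_upwards [hip_bd v] with ω hω
    rw [Pi.mul_apply, Function.comp_apply, abs_mul]
    exact mul_le_mul (hΦ' _) hω (abs_nonneg _) hK'
  have hintF : ∀ θ, Integrable (fun ω => Φ ⟪x ω, θ⟫ - deriv Φ ⟪x ω, θstar⟫ * ⟪x ω, θ⟫) μ :=
    fun θ => (hintΦ θ).sub (hintmul θstar θ)
  have hint2 : ∀ v, Integrable (fun ω => ⟪x ω, v⟫ ^ 2) μ := by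
    intro v
    apply hbdd_int _ ((Lx * ‖v‖) ^ 2) ((hip_meas v).pow_const 2)
    filter_upwards [hip_bd v] with ω hω
    rw [abs_pow]
    exact pow_le_pow_left₀ (abs_nonneg _) hω 2
  have hsm : ∀ b, AEStronglyMeasurable
      (fun ω => (deriv Φ ⟪x ω, b⟫ - deriv Φ ⟪x ω, θstar⟫) • x ω) μ := by
    intro b
    exact (((hΦcont'.measurable.comp (hip_meas b)).sub
      (hΦcont'.measurable.comp (hip_meas θstar))).aestronglyMeasurable).smul
      hxmeas.aestronglyMeasurable
  have hdbd : ∀ b ω, |deriv Φ ⟪x ω, b⟫ - deriv Φ ⟪x ω, θstar⟫| ≤ KΦ' + KΦ' := by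
    intro b ω
    calc |deriv Φ ⟪x ω, b⟫ - deriv Φ ⟪x ω, θstar⟫|
        ≤ |deriv Φ ⟪x ω, b⟫| + |deriv Φ ⟪x ω, θstar⟫| := abs_sub _ _
      _ ≤ KΦ' + KΦ' := add_le_add (hΦ' _) (hΦ' _)
  have hinth : ∀ b, Integrable
      (fun ω => (deriv Φ ⟪x ω, b⟫ - deriv Φ ⟪x ω, θstar⟫) • x ω) μ := by
    intro b
    apply (integrable_const ((KΦ' + KΦ') * Lx)).mono' (hsm b)
    filter_upwards [hxbd] with ω hω
    rw [norm_smul, Real.norm_eq_abs]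
    exact mul_le_mul (hdbd b ω) hω (norm_nonneg _) (by positivity)
  -- the gradient of R
  have hGrad : ∀ θ, HasGradientAt R
      (∫ ω, (deriv Φ ⟪x ω, θ⟫ - deriv Φ ⟪x ω, θstar⟫) • x ω ∂μ) θ := by
    intro θ
    have hF'meas : ∀ θ', AEStronglyMeasurable
        (fun ω => (innerSL ℝ ((deriv Φ ⟪x ω, θ'⟫ - deriv Φ ⟪x ω, θstar⟫) • x ω) :
          EuclideanSpace ℝ (Fin p) →L[ℝ] ℝ)) μ :=
      fun θ' => (innerSL ℝ).continuous.comp_aestronglyMeasurable (hsm θ')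
    have hF'bd : ∀ᵐ ω ∂μ, ∀ θ' : EuclideanSpace ℝ (Fin p), θ' ∈ Metric.ball θ 1 →
        ‖(innerSL ℝ ((deriv Φ ⟪x ω, θ'⟫ - deriv Φ ⟪x ω, θstar⟫) • x ω) :
          EuclideanSpace ℝ (Fin p) →L[ℝ] ℝ)‖ ≤ (KΦ' + KΦ') * Lx := by
      filter_upwards [hxbd] with ω hω
      intro θ' _
      rw [innerSL_apply_norm, norm_smul, Real.norm_eq_abs]
      exact mul_le_mul (hdbd θ' ω) hω (norm_nonneg _) (by positivity)
    have hfd : HasFDerivAt (fun θ' => ∫ ω, (Φ ⟪x ω, θ'⟫ - deriv Φ ⟪x ω, θstar⟫ * ⟪x ω, θ'⟫) ∂μ)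
        (∫ ω, (innerSL ℝ ((deriv Φ ⟪x ω, θ⟫ - deriv Φ ⟪x ω, θstar⟫) • x ω) :
          EuclideanSpace ℝ (Fin p) →L[ℝ] ℝ) ∂μ) θ := by
      apply hasFDerivAt_integral_of_dominated_of_fderiv_le (s := Metric.ball θ 1) (Metric.ball_mem_nhds θ one_pos)
        (bound := fun _ => (KΦ' + KΦ') * Lx)
        (Filter.Eventually.of_forall fun θ' => (hintF θ').aestronglyMeasurable)
        (hintF θ) (hF'meas θ) hF'bd (integrable_const _)
      filter_upwards with ω
      intro θ' _
      have h1 : HasFDerivAt (fun θ'' : EuclideanSpace ℝ (Fin p) => ⟪x ω, θ''⟫)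
          (innerSL ℝ (x ω)) θ' := (innerSL ℝ (x ω)).hasFDerivAt
      have h2 : HasFDerivAt (fun θ'' : EuclideanSpace ℝ (Fin p) => Φ ⟪x ω, θ''⟫)
          (deriv Φ ⟪x ω, θ'⟫ • innerSL ℝ (x ω)) θ' :=
        (hΦ1 _).hasDerivAt.comp_hasFDerivAt θ' h1
      have h3 : HasFDerivAt
          (fun θ'' : EuclideanSpace ℝ (Fin p) => deriv Φ ⟪x ω, θstar⟫ * ⟪x ω, θ''⟫)
          (deriv Φ ⟪x ω, θstar⟫ • innerSL ℝ (x ω)) θ' := h1.const_mul _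
      have h4 := h2.sub h3
      convert h4 using 1
      ext v
      simp [real_inner_smul_left, sub_mul]
      ext v
      simp [real_inner_smul_left, sub_mul]
    have hF'int : Integrable
        (fun ω => (innerSL ℝ ((deriv Φ ⟪x ω, θ⟫ - deriv Φ ⟪x ω, θstar⟫) • x ω) :
          EuclideanSpace ℝ (Fin p) →L[ℝ] ℝ)) μ := by
      apply (integrable_const ((KΦ' + KΦ') * Lx)).mono' (hF'meas θ)
      filter_upwards [hxbd] with ω hω
      rw [innerSL_apply_norm, norm_smul, Real.norm_eq_abs]
      exact mul_le_mul (hdbd θ ω) hω (norm_nonneg _) (by positivity)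
    have heq : (∫ ω, (innerSL ℝ ((deriv Φ ⟪x ω, θ⟫ - deriv Φ ⟪x ω, θstar⟫) • x ω) :
          EuclideanSpace ℝ (Fin p) →L[ℝ] ℝ) ∂μ) =
        (InnerProductSpace.toDual ℝ (EuclideanSpace ℝ (Fin p)))
          (∫ ω, (deriv Φ ⟪x ω, θ⟫ - deriv Φ ⟪x ω, θstar⟫) • x ω ∂μ) := by
      ext v
      rw [ContinuousLinearMap.integral_apply hF'int v]
      rw [InnerProductSpace.toDual_apply_apply, real_inner_comm,
        ← integral_inner (hinth θ) v]
      congr 1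
      funext ω
      rw [innerSL_apply_apply, real_inner_comm]
    rw [heq] at hfd
    have hRfun : R = fun θ' => ∫ ω, (Φ ⟪x ω, θ'⟫ - deriv Φ ⟪x ω, θstar⟫ * ⟪x ω, θ'⟫) ∂μ :=
      funext hR
    rw [← hRfun] at hfd
    have := hfd.hasGradientAt
    simpa using this
  -- inner product with the gradient
  have hGip : ∀ b v, ⟪gradient R b, v⟫ =
      ∫ ω, (deriv Φ ⟪x ω, b⟫ - deriv Φ ⟪x ω, θstar⟫) * ⟪x ω, v⟫ ∂μ := by
    intro b v
    rw [(hGrad b).gradient]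
    conv_lhs => rw [real_inner_comm]
    rw [← integral_inner (hinth b) v]
    congr 1
    funext ω
    rw [real_inner_smul_right, real_inner_comm v (x ω)]
  -- the key integral identity
  have hkey : ∀ a b, R a - R b - ⟪gradient R b, a - b⟫ =
      ∫ ω, (Φ ⟪x ω, a⟫ - Φ ⟪x ω, b⟫ - deriv Φ ⟪x ω, b⟫ * ⟪x ω, a - b⟫) ∂μ := by
    intro a b
    have hintg : Integrable
        (fun ω => (deriv Φ ⟪x ω, b⟫ - deriv Φ ⟪x ω, θstar⟫) * ⟪x ω, a - b⟫) μ := by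
      have := (hintmul b (a - b)).sub (hintmul θstar (a - b))
      simp only [sub_mul]
      exact this
    rw [hR a, hR b, hGip b (a - b)]
    have e4 : ∫ ω, (Φ ⟪x ω, a⟫ - Φ ⟪x ω, b⟫ - deriv Φ ⟪x ω, b⟫ * ⟪x ω, a - b⟫) ∂μ
        = ∫ ω, ((Φ ⟪x ω, a⟫ - deriv Φ ⟪x ω, θstar⟫ * ⟪x ω, a⟫)
            - (Φ ⟪x ω, b⟫ - deriv Φ ⟪x ω, θstar⟫ * ⟪x ω, b⟫)
            - (deriv Φ ⟪x ω, b⟫ - deriv Φ ⟪x ω, θstar⟫) * ⟪x ω, a - b⟫) ∂μ := by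
      apply integral_congr_ae
      filter_upwards with ω
      rw [inner_sub_right]
      ring
    have h5 : Integrable (fun ω => (Φ ⟪x ω, a⟫ - deriv Φ ⟪x ω, θstar⟫ * ⟪x ω, a⟫)
        - (Φ ⟪x ω, b⟫ - deriv Φ ⟪x ω, θstar⟫ * ⟪x ω, b⟫)) μ := (hintF a).sub (hintF b)
    rw [e4, integral_sub h5 hintg, integral_sub (hintF a) (hintF b)]
  have hrem_int : ∀ a b, Integrable
      (fun ω => Φ ⟪x ω, a⟫ - Φ ⟪x ω, b⟫ - deriv Φ ⟪x ω, b⟫ * ⟪x ω, a - b⟫) μ :=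
    fun a b => ((hintΦ a).sub (hintΦ b)).sub (hintmul b (a - b))
  -- gradient at θstar vanishes
  have hg0 : gradient R θstar = 0 := by
    rw [(hGrad θstar).gradient]
    simp
  refine ⟨?_, ?_, hg0, ?_⟩
  · -- (i) smoothness
    intro a b
    rw [hkey a b]
    have hpt : ∀ ω, Φ ⟪x ω, a⟫ - Φ ⟪x ω, b⟫ - deriv Φ ⟪x ω, b⟫ * ⟪x ω, a - b⟫ ≤
        KΦ'' / 2 * ⟪x ω, a - b⟫ ^ 2 := by
      intro ω
      have hib : ⟪x ω, a - b⟫ = ⟪x ω, a⟫ - ⟪x ω, b⟫ := inner_sub_right _ _ _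
      rw [hib]
      exact taylor_le hΦ1 hd2 convex_univ (fun u _ => hΦ''bd u)
        (Set.mem_univ _) (Set.mem_univ _)
    calc ∫ ω, (Φ ⟪x ω, a⟫ - Φ ⟪x ω, b⟫ - deriv Φ ⟪x ω, b⟫ * ⟪x ω, a - b⟫) ∂μ
        ≤ ∫ ω, KΦ'' / 2 * ⟪x ω, a - b⟫ ^ 2 ∂μ :=
          integral_mono (hrem_int a b) ((hint2 (a - b)).const_mul _) hpt
      _ = KΦ'' / 2 * ∫ ω, ⟪x ω, a - b⟫ ^ 2 ∂μ := integral_const_mul _ _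
      _ ≤ KΦ'' / 2 * (lamMax * ‖a - b‖ ^ 2) :=
          mul_le_mul_of_nonneg_left (hlamMax _) (by positivity)
      _ = KΦ'' * lamMax / 2 * ‖a - b‖ ^ 2 := by ring
  · -- (ii) strong convexity
    intro _ C KB hconv hCbd a ha b hb
    rw [hkey a b]
    have hKB : (0:ℝ) ≤ KB := (norm_nonneg a).trans (hCbd a ha)
    have hLK : (0:ℝ) ≤ Lx * KB := mul_nonneg hLx hKB
    have hm : (0:ℝ) < deriv (deriv Φ) (Lx * KB) := hΦ''pos _
    have hmono : ∀ u ∈ Set.Icc (-(Lx * KB)) (Lx * KB),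
        deriv (deriv Φ) (Lx * KB) ≤ deriv (deriv Φ) u := by
      intro u hu
      have habs : |u| ≤ Lx * KB := abs_le.mpr ⟨hu.1, hu.2⟩
      have h1 : deriv (deriv Φ) u = deriv (deriv Φ) |u| := by
        rcases le_or_gt 0 u with h | h
        · rw [abs_of_nonneg h]
        · rw [abs_of_neg h]; exact (hΦ''even u).symm
      rw [h1]
      exact hΦ''anti (Set.mem_Ici.mpr (abs_nonneg u)) (Set.mem_Ici.mpr hLK) habs
    have hpt : ∀ᵐ ω ∂μ,
        deriv (deriv Φ) (Lx * KB) / 2 * ⟪x ω, a - b⟫ ^ 2 ≤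
          Φ ⟪x ω, a⟫ - Φ ⟪x ω, b⟫ - deriv Φ ⟪x ω, b⟫ * ⟪x ω, a - b⟫ := by
      filter_upwards [hxbd] with ω hω
      have hmem : ∀ θ' : EuclideanSpace ℝ (Fin p), ‖θ'‖ ≤ KB →
          ⟪x ω, θ'⟫ ∈ Set.Icc (-(Lx * KB)) (Lx * KB) := by
        intro θ' hθ'
        have habs : |⟪x ω, θ'⟫| ≤ Lx * KB :=
          (abs_real_inner_le_norm _ _).trans (mul_le_mul hω hθ' (norm_nonneg _) hLx)
        exact ⟨neg_le_of_abs_le habs, le_of_abs_le habs⟩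
      have := taylor_ge hΦ1 hd2 (convex_Icc _ _) hmono
        (hmem a (hCbd a ha)) (hmem b (hCbd b hb))
      have hib : ⟪x ω, a - b⟫ = ⟪x ω, a⟫ - ⟪x ω, b⟫ := inner_sub_right _ _ _
      rw [hib]
      exact this
    calc deriv (deriv Φ) (Lx * KB) * lamMin / 2 * ‖a - b‖ ^ 2
        = deriv (deriv Φ) (Lx * KB) / 2 * (lamMin * ‖a - b‖ ^ 2) := by ring
      _ ≤ deriv (deriv Φ) (Lx * KB) / 2 * ∫ ω, ⟪x ω, a - b⟫ ^ 2 ∂μ :=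
          mul_le_mul_of_nonneg_left (hlamMin _) (by positivity)
      _ = ∫ ω, deriv (deriv Φ) (Lx * KB) / 2 * ⟪x ω, a - b⟫ ^ 2 ∂μ :=
          (integral_const_mul _ _).symm
      _ ≤ ∫ ω, (Φ ⟪x ω, a⟫ - Φ ⟪x ω, b⟫ - deriv Φ ⟪x ω, b⟫ * ⟪x ω, a - b⟫) ∂μ :=
          integral_mono_ae ((hint2 (a - b)).const_mul _) (hrem_int a b) hpt
  · -- (iii) minimization
    intro C hC θ hθ
    have h := hkey θ θstar
    rw [hg0] at h
    simp only [inner_zero_left, sub_zero] at h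
    have hnn : 0 ≤ ∫ ω, (Φ ⟪x ω, θ⟫ - Φ ⟪x ω, θstar⟫ -
        deriv Φ ⟪x ω, θstar⟫ * ⟪x ω, θ - θstar⟫) ∂μ := by
      apply integral_nonneg
      intro ω
      have := taylor_ge hΦ1 hd2 convex_univ (c := 0) (fun u _ => (hΦ''pos u).le)
        (Set.mem_univ ⟪x ω, θ⟫) (Set.mem_univ ⟪x ω, θstar⟫)
      have hib : ⟪x ω, θ - θstar⟫ = ⟪x ω, θ⟫ - ⟪x ω, θstar⟫ := inner_sub_right _ _ _
      simp only [Pi.zero_apply]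
      rw [hib]
      nlinarith
    linarith
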